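/- Fix a finite weighted metric space (V, w, d) and λ > 0. For β ≥ 0 and i ∈ V define d^{(β)}(i,j) = β·d(i,j), B^{(β)}(i,r) = {j : d^{(β)}(i,j) ≤ r}, and r_i^{(β)} = min{r ≥ 0 : Σ_{j ∈ B^{(β)}(i,r)} w(j)(r − d^{(β)}(i,j)) ≥ λ}. Then for all i, i' ∈ V and β ≥ 0, r_i^{(β)} ≤ r_{i'}^{(β)} + d^{(β)}(i, i'). -/
import Mathlib


/-- Lipschitz property of the Mettu–Plaxton radii:
`r_i^{(β)} ≤ r_{i'}^{(β)} + d^{(β)}(i, i')`. -/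
theorem stmt12 {V : Type*} [Fintype V] [MetricSpace V]
    (w : V → ℝ) (hw : ∀ j, 0 < w j) (lam : ℝ) (hlam : 0 < lam)
    (β : ℝ) (hβ : 0 ≤ β) (r : V → ℝ)
    (hr : ∀ i, IsLeast {t : ℝ | 0 ≤ t ∧
      lam ≤ ∑ j ∈ Finset.univ.filter (fun j => β * dist i j ≤ t), w j * (t - β * dist i j)} (r i))
    (i i' : V) :
    r i ≤ r i' + β * dist i i' := by
  obtain ⟨⟨hr0, hrs⟩, -⟩ := hr i'
  obtain ⟨-, hlb⟩ := hr i
  apply hlb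
  have hdd : ∀ j : V, β * dist i j ≤ β * dist i i' + β * dist i' j := by
    intro j
    have := dist_triangle i i' j
    nlinarith
  refine ⟨add_nonneg hr0 (mul_nonneg hβ dist_nonneg), ?_⟩
  calc lam ≤ ∑ j ∈ Finset.univ.filter (fun j => β * dist i' j ≤ r i'),
        w j * (r i' - β * dist i' j) := hrs
    _ ≤ ∑ j ∈ Finset.univ.filter (fun j => β * dist i' j ≤ r i'),
        w j * (r i' + β * dist i i' - β * dist i j) := by
        refine Finset.sum_le_sum fun j hj => ?_
        have := hdd j
        nlinarith [(hw j).le]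
    _ ≤ ∑ j ∈ Finset.univ.filter (fun j => β * dist i j ≤ r i' + β * dist i i'),
        w j * (r i' + β * dist i i' - β * dist i j) := by
        refine Finset.sum_le_sum_of_subset_of_nonneg ?_ ?_
        · intro j hj
          simp only [Finset.mem_filter, Finset.mem_univ, true_and] at hj ⊢
          linarith [hdd j]
        · intro j hj _
          simp only [Finset.mem_filter, Finset.mem_univ, true_and] at hj
          nlinarith [(hw j).le]
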